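/- arXiv:2202.01864 — 2 statements merged into one kernel-verified Lean document; each statement's English description precedes it below -/
import Mathlib

section
/- Let V, U, ε_W, ε_Z, ε_X, ε_Y be independent standard Gaussian random variables and set W := V + ε_W, Z := W + V + ε_Z (= 2V + ε_W + ε_Z). For (τ₁, τ₂) ∈ ℝ² define K_τ := U + ε_Y + τ₁·(Z·U + ε_X) + τ₂·W. Then E[Z²·K_τ²] = 12 + 114τ₁² + 30τ₂² and E[Z²]·E[K_τ²] = 12 + 42τ₁² + 12τ₂²; consequently, if Z is independent of K_τ then τ₁ = 0. (Hence in the conditional IV model X := Z·U + ε_X, Y := X + W + U + ε_Y, the causal coefficient of X is identifiable from the independence restriction, while it is not identifiable from any moment restriction.) -/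
open MeasureTheory ProbabilityTheory Real Set
open scoped ENNReal NNReal

lemma gpdf01 (x : ℝ) : gaussianPDFReal 0 1 x = (√(2 * π))⁻¹ * Real.exp (-(1/2) * x ^ 2) := by
  simp only [gaussianPDFReal, NNReal.coe_one, mul_one, sub_zero]
  ring_nf

lemma integrable_pow_exp (n : ℕ) : Integrable (fun x : ℝ => x ^ n * Real.exp (-(1/2) * x ^ 2)) := by
  have h := integrable_rpow_mul_exp_neg_mul_sq (b := 1/2) (by norm_num) (s := (n : ℝ))
    (lt_of_lt_of_le neg_one_lt_zero (Nat.cast_nonneg n))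
  simpa [Real.rpow_natCast] using h

lemma integral_pow_gauss_eq (n : ℕ) :
    ∫ x, x ^ n ∂(gaussianReal 0 1) =
      (√(2 * π))⁻¹ * ∫ x : ℝ, x ^ n * Real.exp (-(1/2) * x ^ 2) := by
  rw [gaussianReal_of_var_ne_zero 0 one_ne_zero, gaussianPDF_def]
  have h1 : (fun x => ENNReal.ofReal (gaussianPDFReal 0 1 x)) =
      fun x => ((gaussianPDFReal 0 1 x).toNNReal : ℝ≥0∞) := rfl
  rw [h1, integral_withDensity_eq_integral_smul
    ((measurable_gaussianPDFReal 0 1).real_toNNReal) (fun x => x ^ n)]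
  rw [← integral_const_mul]
  congr 1
  funext x
  have h2 : (0:ℝ) ≤ gaussianPDFReal 0 1 x := gaussianPDFReal_nonneg 0 1 x
  rw [NNReal.smul_def, smul_eq_mul, Real.coe_toNNReal _ h2, gpdf01]
  ring

lemma integrable_pow_gauss (n : ℕ) :
    Integrable (fun x : ℝ => x ^ n) (gaussianReal 0 1) := by
  rw [gaussianReal_of_var_ne_zero 0 one_ne_zero, gaussianPDF_def]
  have h1 : (fun x => ENNReal.ofReal (gaussianPDFReal 0 1 x)) =
      fun x => ((gaussianPDFReal 0 1 x).toNNReal : ℝ≥0∞) := rfl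
  rw [h1]
  rw [integrable_withDensity_iff_integrable_smul ((measurable_gaussianPDFReal 0 1).real_toNNReal)]
  have : (fun x : ℝ => ((gaussianPDFReal 0 1 x).toNNReal : ℝ) • x ^ n) =
      fun x : ℝ => (√(2 * π))⁻¹ * (x ^ n * Real.exp (-(1/2) * x ^ 2)) := by
    funext x
    rw [smul_eq_mul, Real.coe_toNNReal _ (gaussianPDFReal_nonneg 0 1 x), gpdf01]
    ring
  refine ((integrable_pow_exp n).const_mul ((√(2 * π))⁻¹)).congr
    (Filter.Eventually.of_forall fun x => ?_)
  show (√(2 * π))⁻¹ * (x ^ n * rexp (-(1 / 2) * x ^ 2)) = (gaussianPDFReal 0 1 x).toNNReal • x ^ n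
  rw [NNReal.smul_def, smul_eq_mul, Real.coe_toNNReal _ (gaussianPDFReal_nonneg 0 1 x), gpdf01]
  ring

lemma integral_exp_odd (n : ℕ) (hn : Odd n) :
    ∫ x : ℝ, x ^ n * Real.exp (-(1/2) * x ^ 2) = 0 := by
  have hmp : MeasurePreserving (fun x : ℝ => -x) volume volume :=
    ⟨measurable_neg, Measure.map_neg_eq_self volume⟩
  have h := hmp.integral_comp (Homeomorph.neg ℝ).isClosedEmbedding.measurableEmbedding
    (fun x : ℝ => x ^ n * Real.exp (-(1/2) * x ^ 2))
  have h2 : ∫ x : ℝ, (-x) ^ n * Real.exp (-(1/2) * (-x) ^ 2)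
      = - ∫ x : ℝ, x ^ n * Real.exp (-(1/2) * x ^ 2) := by
    rw [← integral_neg]
    congr 1
    funext x
    rw [hn.neg_pow, neg_sq, neg_mul]
  have h3 := h.symm.trans h2
  linarith

lemma integral_exp_Ioi (n : ℕ) :
    ∫ x in Set.Ioi (0:ℝ), x ^ n * Real.exp (-(1/2) * x ^ 2)
      = (1/2:ℝ) ^ (-((n:ℝ)+1)/2) * (1/2) * Real.Gamma (((n:ℝ)+1)/2) := by
  rw [← integral_rpow_mul_exp_neg_mul_rpow (p := 2) (q := (n:ℝ)) (b := 1/2) (by norm_num)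
    (lt_of_lt_of_le neg_one_lt_zero (Nat.cast_nonneg n)) (by norm_num)]
  refine setIntegral_congr_fun measurableSet_Ioi (fun x hx => ?_)
  have hx' : (0:ℝ) < x := hx
  have h2 : x ^ (2:ℝ) = x ^ (2:ℕ) := by
    rw [show (2:ℝ) = ((2:ℕ):ℝ) by norm_num, Real.rpow_natCast]
  rw [Real.rpow_natCast, h2]

lemma integral_exp_even (n : ℕ) (hn : Even n) :
    ∫ x : ℝ, x ^ n * Real.exp (-(1/2) * x ^ 2)
      = 2 * ((1/2:ℝ) ^ (-((n:ℝ)+1)/2) * (1/2) * Real.Gamma (((n:ℝ)+1)/2)) := by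
  rw [← integral_exp_Ioi n,
    ← integral_comp_abs (f := fun x : ℝ => x ^ n * Real.exp (-(1/2) * x ^ 2))]
  congr 1
  funext x
  rw [pow_abs, abs_of_nonneg (hn.pow_nonneg x), sq_abs]

lemma sqrt_two_pi_pos : (0:ℝ) < √(2 * π) := Real.sqrt_pos.mpr (by positivity)

lemma mom_even (n : ℕ) (hn : Even n) : ∫ x, x ^ n ∂(gaussianReal 0 1)
    = (√(2*π))⁻¹ * (2 * ((1/2:ℝ) ^ (-((n:ℝ)+1)/2) * (1/2) * Real.Gamma (((n:ℝ)+1)/2))) := by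
  rw [integral_pow_gauss_eq, integral_exp_even n hn]

lemma half_rpow (y : ℝ) : (1/2:ℝ) ^ (-y) = 2 ^ y := by
  rw [show (1/2:ℝ) = 2⁻¹ by norm_num, Real.inv_rpow (by norm_num), ← Real.rpow_neg (by norm_num),
    neg_neg]

lemma gamma_32 : Real.Gamma (3/2) = √π / 2 := by
  rw [show (3:ℝ)/2 = 1/2 + 1 by ring, Real.Gamma_add_one (by norm_num), Real.Gamma_one_half_eq]
  ring

lemma gamma_52 : Real.Gamma (5/2) = 3 * √π / 4 := by
  rw [show (5:ℝ)/2 = 3/2 + 1 by ring, Real.Gamma_add_one (by norm_num), gamma_32]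
  ring

lemma sqrt2_sq : √2 * √2 = 2 := Real.mul_self_sqrt (by norm_num)

lemma gmoment0 : ∫ x, x ^ 0 ∂(gaussianReal 0 1) = 1 := by simp

lemma gmoment1 : ∫ x, x ^ 1 ∂(gaussianReal 0 1) = 0 := by
  rw [integral_pow_gauss_eq, integral_exp_odd 1 (by norm_num)]; ring

lemma gmoment3 : ∫ x, x ^ 3 ∂(gaussianReal 0 1) = 0 := by
  rw [integral_pow_gauss_eq, integral_exp_odd 3 ⟨1, by norm_num⟩]; ring

lemma gmoment2 : ∫ x, x ^ 2 ∂(gaussianReal 0 1) = 1 := by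
  rw [mom_even 2 (by norm_num)]
  rw [show (-(((2:ℕ):ℝ)+1)/2) = -((3:ℝ)/2) by norm_num, half_rpow,
    show (((2:ℕ):ℝ)+1)/2 = (3:ℝ)/2 by norm_num, gamma_32,
    show (3:ℝ)/2 = 1 + 1/2 by ring, Real.rpow_add (by norm_num), Real.rpow_one,
    ← Real.sqrt_eq_rpow,
    Real.sqrt_mul (by norm_num : (0:ℝ) ≤ 2) π]
  have h2 : √2 > 0 := Real.sqrt_pos.mpr (by norm_num)
  have hπ : √π > 0 := Real.sqrt_pos.mpr Real.pi_pos
  field_simp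

lemma gmoment4 : ∫ x, x ^ 4 ∂(gaussianReal 0 1) = 3 := by
  rw [mom_even 4 ⟨2, rfl⟩]
  rw [show (-(((4:ℕ):ℝ)+1)/2) = -((5:ℝ)/2) by norm_num, half_rpow,
    show (((4:ℕ):ℝ)+1)/2 = (5:ℝ)/2 by norm_num, gamma_52,
    show (5:ℝ)/2 = 2 + 1/2 by ring, Real.rpow_add (by norm_num),
    show (2:ℝ) ^ (2:ℝ) = 4 by norm_num [show (2:ℝ) = ((2:ℕ):ℝ) by norm_num, Real.rpow_natCast],
    ← Real.sqrt_eq_rpow,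
    Real.sqrt_mul (by norm_num : (0:ℝ) ≤ 2) π]
  have h2 : √2 > 0 := Real.sqrt_pos.mpr (by norm_num)
  have hπ : √π > 0 := Real.sqrt_pos.mpr Real.pi_pos
  field_simp

section key
variable {Ω : Type*} [MeasurableSpace Ω] {μ : Measure Ω} [IsProbabilityMeasure μ]

lemma single_int (g : Ω → ℝ) (hgm : Measurable g)
    (hlaw : Measure.map g μ = gaussianReal 0 1) (n : ℕ) :
    Integrable (fun ω => g ω ^ n) μ := by
  have h : Integrable (fun x : ℝ => x ^ n) (Measure.map g μ) := by
    rw [hlaw]; exact integrable_pow_gauss n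
  rwa [integrable_map_measure (by apply h.1) hgm.aemeasurable] at h

lemma single_val (g : Ω → ℝ) (hgm : Measurable g)
    (hlaw : Measure.map g μ = gaussianReal 0 1) (n : ℕ) :
    ∫ ω, g ω ^ n ∂μ = ∫ x, x ^ n ∂(gaussianReal 0 1) := by
  rw [← hlaw, integral_map hgm.aemeasurable]
  exact (Measurable.aestronglyMeasurable (by measurability))

lemma mono_key (g : Fin 6 → Ω → ℝ) (hgm : ∀ i, Measurable (g i))
    (hindep : iIndepFun g μ)
    (hlaw : ∀ i, Measure.map (g i) μ = gaussianReal 0 1)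
    (k : Fin 6 → ℕ) (s : Finset (Fin 6)) :
    Integrable (fun ω => ∏ j ∈ s, g j ω ^ k j) μ ∧
      (∫ ω, ∏ j ∈ s, g j ω ^ k j ∂μ)
        = ∏ j ∈ s, ∫ x, x ^ k j ∂(gaussianReal 0 1) := by
  classical
  have hind2 : iIndepFun (fun j => fun ω => g j ω ^ k j) μ :=
    hindep.comp (fun j x => x ^ k j) (fun j => measurable_id.pow_const (k j))
  induction s using Finset.induction_on with
  | empty => simp
  | insert _ _ ha _ =>
    rename_i a s ih
    have hIF : IndepFun (∏ j ∈ s, fun ω => g j ω ^ k j) (fun ω => g a ω ^ k a) μ :=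
      hind2.indepFun_finset_prod_of_notMem (fun j => (hgm j).pow_const (k j)) ha
    have hprodeq : (∏ j ∈ s, fun ω => g j ω ^ k j) = fun ω => ∏ j ∈ s, g j ω ^ k j := by
      funext ω; rw [Finset.prod_apply]
    rw [hprodeq] at hIF
    have hint : Integrable ((fun ω => ∏ j ∈ s, g j ω ^ k j) * fun ω => g a ω ^ k a) μ :=
      hIF.integrable_mul ih.1 (single_int (g a) (hgm a) (hlaw a) (k a))
    have hval := hIF.integral_mul_eq_mul_integral ih.1.aestronglyMeasurable (single_int (g a) (hgm a) (hlaw a) (k a)).aestronglyMeasurable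
    have hfe : ((fun ω => ∏ j ∈ s, g j ω ^ k j) * fun ω => g a ω ^ k a)
        = fun ω => ∏ j ∈ insert a s, g j ω ^ k j := by
      funext ω
      rw [Finset.prod_insert ha]
      simp [mul_comm]
    constructor
    · rw [← hfe]; exact hint
    · rw [← hfe]
      show ∫ ω, ((fun ω => ∏ j ∈ s, g j ω ^ k j) * fun ω => g a ω ^ k a) ω ∂μ = _
      rw [hval, Finset.prod_insert ha, ih.2, single_val (g a) (hgm a) (hlaw a) (k a)]
      ring

end key

section key2
variable {Ω : Type*} [MeasurableSpace Ω] {μ : Measure Ω} [IsProbabilityMeasure μ]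

lemma list_key (g : Fin 6 → Ω → ℝ) (hgm : ∀ i, Measurable (g i))
    (hindep : iIndepFun g μ)
    (hlaw : ∀ i, Measure.map (g i) μ = gaussianReal 0 1)
    (l : List (ℝ × (Fin 6 → ℕ))) :
    Integrable (fun ω => (l.map (fun t => t.1 * ∏ i, g i ω ^ t.2 i)).sum) μ ∧
      (∫ ω, (l.map (fun t => t.1 * ∏ i, g i ω ^ t.2 i)).sum ∂μ)
        = (l.map (fun t => t.1 * ∏ i, ∫ x, x ^ (t.2 i) ∂(gaussianReal 0 1))).sum := by
  induction l with
  | nil => simp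
  | cons t l ih =>
    have hm := mono_key g hgm hindep hlaw t.2 Finset.univ
    have h1 : Integrable (fun ω => t.1 * ∏ i, g i ω ^ t.2 i) μ := hm.1.const_mul t.1
    constructor
    · simpa [Pi.add_def] using h1.add ih.1
    · have : (fun ω => ((t :: l).map (fun t => t.1 * ∏ i, g i ω ^ t.2 i)).sum)
          = fun ω => (t.1 * ∏ i, g i ω ^ t.2 i)
            + (l.map (fun t => t.1 * ∏ i, g i ω ^ t.2 i)).sum := by
        funext ω; simp
      rw [this, integral_add h1 ih.1, List.map_cons, List.sum_cons, ih.2,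
        integral_const_mul, hm.2]

end key2

section key3
variable {Ω : Type*} [MeasurableSpace Ω] {μ : Measure Ω} [IsProbabilityMeasure μ]
variable (V U εW εZ εX εY : Ω → ℝ)

lemma mono6
    (hVm : Measurable V) (hUm : Measurable U) (hεWm : Measurable εW)
    (hεZm : Measurable εZ) (hεXm : Measurable εX) (hεYm : Measurable εY)
    (hindep : iIndepFun ![V, U, εW, εZ, εX, εY] μ)
    (hV : Measure.map V μ = gaussianReal 0 1)
    (hU : Measure.map U μ = gaussianReal 0 1)
    (hεW : Measure.map εW μ = gaussianReal 0 1)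
    (hεZ : Measure.map εZ μ = gaussianReal 0 1)
    (hεX : Measure.map εX μ = gaussianReal 0 1)
    (hεY : Measure.map εY μ = gaussianReal 0 1)
    (k0 k1 k2 k3 k4 k5 : ℕ) :
    Integrable (fun ω => V ω ^ k0 * U ω ^ k1 * εW ω ^ k2 * εZ ω ^ k3 * εX ω ^ k4 * εY ω ^ k5) μ ∧
      ∫ ω, V ω ^ k0 * U ω ^ k1 * εW ω ^ k2 * εZ ω ^ k3 * εX ω ^ k4 * εY ω ^ k5 ∂μ
        = (∫ x, x ^ k0 ∂(gaussianReal 0 1)) * (∫ x, x ^ k1 ∂(gaussianReal 0 1))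
          * (∫ x, x ^ k2 ∂(gaussianReal 0 1)) * (∫ x, x ^ k3 ∂(gaussianReal 0 1))
          * (∫ x, x ^ k4 ∂(gaussianReal 0 1)) * (∫ x, x ^ k5 ∂(gaussianReal 0 1)) := by
  have hgm : ∀ i, Measurable (![V, U, εW, εZ, εX, εY] i) := by
    intro i; fin_cases i <;> assumption
  have hlaw : ∀ i, Measure.map (![V, U, εW, εZ, εX, εY] i) μ = gaussianReal 0 1 := by
    intro i; fin_cases i <;> assumption
  have h := mono_key ![V, U, εW, εZ, εX, εY] hgm hindep hlaw ![k0, k1, k2, k3, k4, k5] Finset.univ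
  have hfe : (fun ω => ∏ j, ![V, U, εW, εZ, εX, εY] j ω ^ ![k0, k1, k2, k3, k4, k5] j)
      = fun ω => V ω ^ k0 * U ω ^ k1 * εW ω ^ k2 * εZ ω ^ k3 * εX ω ^ k4 * εY ω ^ k5 := by
    funext ω; rw [Fin.prod_univ_six]; rfl
  have hve : (∏ j, ∫ x, x ^ (![k0, k1, k2, k3, k4, k5] j) ∂(gaussianReal 0 1))
      = (∫ x, x ^ k0 ∂(gaussianReal 0 1)) * (∫ x, x ^ k1 ∂(gaussianReal 0 1))
          * (∫ x, x ^ k2 ∂(gaussianReal 0 1)) * (∫ x, x ^ k3 ∂(gaussianReal 0 1))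
          * (∫ x, x ^ k4 ∂(gaussianReal 0 1)) * (∫ x, x ^ k5 ∂(gaussianReal 0 1)) := by
    rw [Fin.prod_univ_six]; rfl
  rw [hfe, hve] at h
  exact h

lemma list_key6
    (hVm : Measurable V) (hUm : Measurable U) (hεWm : Measurable εW)
    (hεZm : Measurable εZ) (hεXm : Measurable εX) (hεYm : Measurable εY)
    (hindep : iIndepFun ![V, U, εW, εZ, εX, εY] μ)
    (hV : Measure.map V μ = gaussianReal 0 1)
    (hU : Measure.map U μ = gaussianReal 0 1)
    (hεW : Measure.map εW μ = gaussianReal 0 1)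
    (hεZ : Measure.map εZ μ = gaussianReal 0 1)
    (hεX : Measure.map εX μ = gaussianReal 0 1)
    (hεY : Measure.map εY μ = gaussianReal 0 1)
    (l : List (ℝ × ℕ × ℕ × ℕ × ℕ × ℕ × ℕ)) :
    Integrable (fun ω => (l.map (fun t => t.1 * (V ω ^ t.2.1 * U ω ^ t.2.2.1 * εW ω ^ t.2.2.2.1
        * εZ ω ^ t.2.2.2.2.1 * εX ω ^ t.2.2.2.2.2.1 * εY ω ^ t.2.2.2.2.2.2))).sum) μ ∧
      (∫ ω, (l.map (fun t => t.1 * (V ω ^ t.2.1 * U ω ^ t.2.2.1 * εW ω ^ t.2.2.2.1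
          * εZ ω ^ t.2.2.2.2.1 * εX ω ^ t.2.2.2.2.2.1 * εY ω ^ t.2.2.2.2.2.2))).sum ∂μ)
        = (l.map (fun t => t.1 * ((∫ x, x ^ t.2.1 ∂(gaussianReal 0 1))
            * (∫ x, x ^ t.2.2.1 ∂(gaussianReal 0 1)) * (∫ x, x ^ t.2.2.2.1 ∂(gaussianReal 0 1))
            * (∫ x, x ^ t.2.2.2.2.1 ∂(gaussianReal 0 1))
            * (∫ x, x ^ t.2.2.2.2.2.1 ∂(gaussianReal 0 1))
            * (∫ x, x ^ t.2.2.2.2.2.2 ∂(gaussianReal 0 1))))).sum := by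
  induction l with
  | nil => simp
  | cons t l ih =>
    have hm := mono6 V U εW εZ εX εY hVm hUm hεWm hεZm hεXm hεYm hindep hV hU hεW hεZ hεX hεY
      t.2.1 t.2.2.1 t.2.2.2.1 t.2.2.2.2.1 t.2.2.2.2.2.1 t.2.2.2.2.2.2
    have h1 : Integrable (fun ω => t.1 * (V ω ^ t.2.1 * U ω ^ t.2.2.1 * εW ω ^ t.2.2.2.1
        * εZ ω ^ t.2.2.2.2.1 * εX ω ^ t.2.2.2.2.2.1 * εY ω ^ t.2.2.2.2.2.2)) μ :=
      hm.1.const_mul t.1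
    constructor
    · simpa [Pi.add_def] using h1.add ih.1
    · have hfe : (fun ω => ((t :: l).map (fun t => t.1 * (V ω ^ t.2.1 * U ω ^ t.2.2.1
            * εW ω ^ t.2.2.2.1 * εZ ω ^ t.2.2.2.2.1 * εX ω ^ t.2.2.2.2.2.1
            * εY ω ^ t.2.2.2.2.2.2))).sum)
          = fun ω => (t.1 * (V ω ^ t.2.1 * U ω ^ t.2.2.1 * εW ω ^ t.2.2.2.1
            * εZ ω ^ t.2.2.2.2.1 * εX ω ^ t.2.2.2.2.2.1 * εY ω ^ t.2.2.2.2.2.2))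
            + (l.map (fun t => t.1 * (V ω ^ t.2.1 * U ω ^ t.2.2.1 * εW ω ^ t.2.2.2.1
              * εZ ω ^ t.2.2.2.2.1 * εX ω ^ t.2.2.2.2.2.1 * εY ω ^ t.2.2.2.2.2.2))).sum := by
        funext ω; simp
      rw [hfe, integral_add h1 ih.1, List.map_cons, List.sum_cons, ih.2,
        integral_const_mul, hm.2]

end key3

set_option maxHeartbeats 3000000 in
/-- With `V, U, ε_W, ε_Z, ε_X, ε_Y` independent standard Gaussians,
`W := V + ε_W`, `Z := W + V + ε_Z`, and `K_τ := U + ε_Y + τ₁·(Z·U + ε_X) + τ₂·W`: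
`E[Z²K_τ²] = 12 + 114τ₁² + 30τ₂²`, `E[Z²]E[K_τ²] = 12 + 42τ₁² + 12τ₂²`, and independence of
`Z` and `K_τ` forces `τ₁ = 0`. -/
theorem statement18 {Ω : Type*} [MeasurableSpace Ω] (μ : Measure Ω) [IsProbabilityMeasure μ]
    (V U εW εZ εX εY : Ω → ℝ)
    (hVm : Measurable V) (hUm : Measurable U) (hεWm : Measurable εW)
    (hεZm : Measurable εZ) (hεXm : Measurable εX) (hεYm : Measurable εY)
    (hindep : iIndepFun ![V, U, εW, εZ, εX, εY] μ)
    (hV : Measure.map V μ = gaussianReal 0 1)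
    (hU : Measure.map U μ = gaussianReal 0 1)
    (hεW : Measure.map εW μ = gaussianReal 0 1)
    (hεZ : Measure.map εZ μ = gaussianReal 0 1)
    (hεX : Measure.map εX μ = gaussianReal 0 1)
    (hεY : Measure.map εY μ = gaussianReal 0 1)
    (W Z : Ω → ℝ)
    (hW : W = fun ω => V ω + εW ω)
    (hZ : Z = fun ω => W ω + V ω + εZ ω)
    (τ₁ τ₂ : ℝ) :
    (∫ ω, (Z ω) ^ 2 * (U ω + εY ω + τ₁ * (Z ω * U ω + εX ω) + τ₂ * W ω) ^ 2 ∂μ)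
        = 12 + 114 * τ₁ ^ 2 + 30 * τ₂ ^ 2 ∧
      (∫ ω, (Z ω) ^ 2 ∂μ)
          * (∫ ω, (U ω + εY ω + τ₁ * (Z ω * U ω + εX ω) + τ₂ * W ω) ^ 2 ∂μ)
        = 12 + 42 * τ₁ ^ 2 + 12 * τ₂ ^ 2 ∧
      (IndepFun Z (fun ω => U ω + εY ω + τ₁ * (Z ω * U ω + εX ω) + τ₂ * W ω) μ →
        τ₁ = 0) := by
  let L1 : List (ℝ × ℕ × ℕ × ℕ × ℕ × ℕ × ℕ) :=
    [(1, 0, 0, 0, 2, 0, 2),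
    (2 * τ₁, 0, 0, 0, 2, 1, 1),
    (1 * τ₁ ^ 2, 0, 0, 0, 2, 2, 0),
    (2, 0, 0, 1, 1, 0, 2),
    (4 * τ₁, 0, 0, 1, 1, 1, 1),
    (2 * τ₁ ^ 2, 0, 0, 1, 1, 2, 0),
    (2 * τ₂, 0, 0, 1, 2, 0, 1),
    (2 * τ₁ * τ₂, 0, 0, 1, 2, 1, 0),
    (1, 0, 0, 2, 0, 0, 2),
    (2 * τ₁, 0, 0, 2, 0, 1, 1),
    (1 * τ₁ ^ 2, 0, 0, 2, 0, 2, 0),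
    (4 * τ₂, 0, 0, 2, 1, 0, 1),
    (4 * τ₁ * τ₂, 0, 0, 2, 1, 1, 0),
    (1 * τ₂ ^ 2, 0, 0, 2, 2, 0, 0),
    (2 * τ₂, 0, 0, 3, 0, 0, 1),
    (2 * τ₁ * τ₂, 0, 0, 3, 0, 1, 0),
    (2 * τ₂ ^ 2, 0, 0, 3, 1, 0, 0),
    (1 * τ₂ ^ 2, 0, 0, 4, 0, 0, 0),
    (2, 0, 1, 0, 2, 0, 1),
    (2 * τ₁, 0, 1, 0, 2, 1, 0),
    (2 * τ₁, 0, 1, 0, 3, 0, 1),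
    (2 * τ₁ ^ 2, 0, 1, 0, 3, 1, 0),
    (4, 0, 1, 1, 1, 0, 1),
    (4 * τ₁, 0, 1, 1, 1, 1, 0),
    (2 * τ₂, 0, 1, 1, 2, 0, 0),
    (6 * τ₁, 0, 1, 1, 2, 0, 1),
    (6 * τ₁ ^ 2, 0, 1, 1, 2, 1, 0),
    (2 * τ₁ * τ₂, 0, 1, 1, 3, 0, 0),
    (2, 0, 1, 2, 0, 0, 1),
    (2 * τ₁, 0, 1, 2, 0, 1, 0),
    (4 * τ₂, 0, 1, 2, 1, 0, 0),
    (6 * τ₁, 0, 1, 2, 1, 0, 1),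
    (6 * τ₁ ^ 2, 0, 1, 2, 1, 1, 0),
    (6 * τ₁ * τ₂, 0, 1, 2, 2, 0, 0),
    (2 * τ₂, 0, 1, 3, 0, 0, 0),
    (2 * τ₁, 0, 1, 3, 0, 0, 1),
    (2 * τ₁ ^ 2, 0, 1, 3, 0, 1, 0),
    (6 * τ₁ * τ₂, 0, 1, 3, 1, 0, 0),
    (2 * τ₁ * τ₂, 0, 1, 4, 0, 0, 0),
    (1, 0, 2, 0, 2, 0, 0),
    (2 * τ₁, 0, 2, 0, 3, 0, 0),
    (1 * τ₁ ^ 2, 0, 2, 0, 4, 0, 0),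
    (2, 0, 2, 1, 1, 0, 0),
    (6 * τ₁, 0, 2, 1, 2, 0, 0),
    (4 * τ₁ ^ 2, 0, 2, 1, 3, 0, 0),
    (1, 0, 2, 2, 0, 0, 0),
    (6 * τ₁, 0, 2, 2, 1, 0, 0),
    (6 * τ₁ ^ 2, 0, 2, 2, 2, 0, 0),
    (2 * τ₁, 0, 2, 3, 0, 0, 0),
    (4 * τ₁ ^ 2, 0, 2, 3, 1, 0, 0),
    (1 * τ₁ ^ 2, 0, 2, 4, 0, 0, 0),
    (4, 1, 0, 0, 1, 0, 2),
    (8 * τ₁, 1, 0, 0, 1, 1, 1),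
    (4 * τ₁ ^ 2, 1, 0, 0, 1, 2, 0),
    (2 * τ₂, 1, 0, 0, 2, 0, 1),
    (2 * τ₁ * τ₂, 1, 0, 0, 2, 1, 0),
    (4, 1, 0, 1, 0, 0, 2),
    (8 * τ₁, 1, 0, 1, 0, 1, 1),
    (4 * τ₁ ^ 2, 1, 0, 1, 0, 2, 0),
    (12 * τ₂, 1, 0, 1, 1, 0, 1),
    (12 * τ₁ * τ₂, 1, 0, 1, 1, 1, 0),
    (2 * τ₂ ^ 2, 1, 0, 1, 2, 0, 0),
    (10 * τ₂, 1, 0, 2, 0, 0, 1),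
    (10 * τ₁ * τ₂, 1, 0, 2, 0, 1, 0),
    (8 * τ₂ ^ 2, 1, 0, 2, 1, 0, 0),
    (6 * τ₂ ^ 2, 1, 0, 3, 0, 0, 0),
    (8, 1, 1, 0, 1, 0, 1),
    (8 * τ₁, 1, 1, 0, 1, 1, 0),
    (2 * τ₂, 1, 1, 0, 2, 0, 0),
    (12 * τ₁, 1, 1, 0, 2, 0, 1),
    (12 * τ₁ ^ 2, 1, 1, 0, 2, 1, 0),
    (2 * τ₁ * τ₂, 1, 1, 0, 3, 0, 0),
    (8, 1, 1, 1, 0, 0, 1),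
    (8 * τ₁, 1, 1, 1, 0, 1, 0),
    (12 * τ₂, 1, 1, 1, 1, 0, 0),
    (24 * τ₁, 1, 1, 1, 1, 0, 1),
    (24 * τ₁ ^ 2, 1, 1, 1, 1, 1, 0),
    (18 * τ₁ * τ₂, 1, 1, 1, 2, 0, 0),
    (10 * τ₂, 1, 1, 2, 0, 0, 0),
    (12 * τ₁, 1, 1, 2, 0, 0, 1),
    (12 * τ₁ ^ 2, 1, 1, 2, 0, 1, 0),
    (30 * τ₁ * τ₂, 1, 1, 2, 1, 0, 0),
    (14 * τ₁ * τ₂, 1, 1, 3, 0, 0, 0),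
    (4, 1, 2, 0, 1, 0, 0),
    (12 * τ₁, 1, 2, 0, 2, 0, 0),
    (8 * τ₁ ^ 2, 1, 2, 0, 3, 0, 0),
    (4, 1, 2, 1, 0, 0, 0),
    (24 * τ₁, 1, 2, 1, 1, 0, 0),
    (24 * τ₁ ^ 2, 1, 2, 1, 2, 0, 0),
    (12 * τ₁, 1, 2, 2, 0, 0, 0),
    (24 * τ₁ ^ 2, 1, 2, 2, 1, 0, 0),
    (8 * τ₁ ^ 2, 1, 2, 3, 0, 0, 0),
    (4, 2, 0, 0, 0, 0, 2),
    (8 * τ₁, 2, 0, 0, 0, 1, 1),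
    (4 * τ₁ ^ 2, 2, 0, 0, 0, 2, 0),
    (8 * τ₂, 2, 0, 0, 1, 0, 1),
    (8 * τ₁ * τ₂, 2, 0, 0, 1, 1, 0),
    (1 * τ₂ ^ 2, 2, 0, 0, 2, 0, 0),
    (16 * τ₂, 2, 0, 1, 0, 0, 1),
    (16 * τ₁ * τ₂, 2, 0, 1, 0, 1, 0),
    (10 * τ₂ ^ 2, 2, 0, 1, 1, 0, 0),
    (13 * τ₂ ^ 2, 2, 0, 2, 0, 0, 0),
    (8, 2, 1, 0, 0, 0, 1),
    (8 * τ₁, 2, 1, 0, 0, 1, 0),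
    (8 * τ₂, 2, 1, 0, 1, 0, 0),
    (24 * τ₁, 2, 1, 0, 1, 0, 1),
    (24 * τ₁ ^ 2, 2, 1, 0, 1, 1, 0),
    (12 * τ₁ * τ₂, 2, 1, 0, 2, 0, 0),
    (16 * τ₂, 2, 1, 1, 0, 0, 0),
    (24 * τ₁, 2, 1, 1, 0, 0, 1),
    (24 * τ₁ ^ 2, 2, 1, 1, 0, 1, 0),
    (48 * τ₁ * τ₂, 2, 1, 1, 1, 0, 0),
    (36 * τ₁ * τ₂, 2, 1, 2, 0, 0, 0),
    (4, 2, 2, 0, 0, 0, 0),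
    (24 * τ₁, 2, 2, 0, 1, 0, 0),
    (24 * τ₁ ^ 2, 2, 2, 0, 2, 0, 0),
    (24 * τ₁, 2, 2, 1, 0, 0, 0),
    (48 * τ₁ ^ 2, 2, 2, 1, 1, 0, 0),
    (24 * τ₁ ^ 2, 2, 2, 2, 0, 0, 0),
    (8 * τ₂, 3, 0, 0, 0, 0, 1),
    (8 * τ₁ * τ₂, 3, 0, 0, 0, 1, 0),
    (4 * τ₂ ^ 2, 3, 0, 0, 1, 0, 0),
    (12 * τ₂ ^ 2, 3, 0, 1, 0, 0, 0),
    (8 * τ₂, 3, 1, 0, 0, 0, 0),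
    (16 * τ₁, 3, 1, 0, 0, 0, 1),
    (16 * τ₁ ^ 2, 3, 1, 0, 0, 1, 0),
    (24 * τ₁ * τ₂, 3, 1, 0, 1, 0, 0),
    (40 * τ₁ * τ₂, 3, 1, 1, 0, 0, 0),
    (16 * τ₁, 3, 2, 0, 0, 0, 0),
    (32 * τ₁ ^ 2, 3, 2, 0, 1, 0, 0),
    (32 * τ₁ ^ 2, 3, 2, 1, 0, 0, 0),
    (4 * τ₂ ^ 2, 4, 0, 0, 0, 0, 0),
    (16 * τ₁ * τ₂, 4, 1, 0, 0, 0, 0),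
    (16 * τ₁ ^ 2, 4, 2, 0, 0, 0, 0)]
  let L2 : List (ℝ × ℕ × ℕ × ℕ × ℕ × ℕ × ℕ) :=
    [(1, 0, 0, 0, 2, 0, 0),
    (2, 0, 0, 1, 1, 0, 0),
    (1, 0, 0, 2, 0, 0, 0),
    (4, 1, 0, 0, 1, 0, 0),
    (4, 1, 0, 1, 0, 0, 0),
    (4, 2, 0, 0, 0, 0, 0)]
  let L3 : List (ℝ × ℕ × ℕ × ℕ × ℕ × ℕ × ℕ) :=
    [(1, 0, 0, 0, 0, 0, 2),
    (2 * τ₁, 0, 0, 0, 0, 1, 1),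
    (1 * τ₁ ^ 2, 0, 0, 0, 0, 2, 0),
    (2 * τ₂, 0, 0, 1, 0, 0, 1),
    (2 * τ₁ * τ₂, 0, 0, 1, 0, 1, 0),
    (1 * τ₂ ^ 2, 0, 0, 2, 0, 0, 0),
    (2, 0, 1, 0, 0, 0, 1),
    (2 * τ₁, 0, 1, 0, 0, 1, 0),
    (2 * τ₁, 0, 1, 0, 1, 0, 1),
    (2 * τ₁ ^ 2, 0, 1, 0, 1, 1, 0),
    (2 * τ₂, 0, 1, 1, 0, 0, 0),
    (2 * τ₁, 0, 1, 1, 0, 0, 1),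
    (2 * τ₁ ^ 2, 0, 1, 1, 0, 1, 0),
    (2 * τ₁ * τ₂, 0, 1, 1, 1, 0, 0),
    (2 * τ₁ * τ₂, 0, 1, 2, 0, 0, 0),
    (1, 0, 2, 0, 0, 0, 0),
    (2 * τ₁, 0, 2, 0, 1, 0, 0),
    (1 * τ₁ ^ 2, 0, 2, 0, 2, 0, 0),
    (2 * τ₁, 0, 2, 1, 0, 0, 0),
    (2 * τ₁ ^ 2, 0, 2, 1, 1, 0, 0),
    (1 * τ₁ ^ 2, 0, 2, 2, 0, 0, 0),
    (2 * τ₂, 1, 0, 0, 0, 0, 1),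
    (2 * τ₁ * τ₂, 1, 0, 0, 0, 1, 0),
    (2 * τ₂ ^ 2, 1, 0, 1, 0, 0, 0),
    (2 * τ₂, 1, 1, 0, 0, 0, 0),
    (4 * τ₁, 1, 1, 0, 0, 0, 1),
    (4 * τ₁ ^ 2, 1, 1, 0, 0, 1, 0),
    (2 * τ₁ * τ₂, 1, 1, 0, 1, 0, 0),
    (6 * τ₁ * τ₂, 1, 1, 1, 0, 0, 0),
    (4 * τ₁, 1, 2, 0, 0, 0, 0),
    (4 * τ₁ ^ 2, 1, 2, 0, 1, 0, 0),
    (4 * τ₁ ^ 2, 1, 2, 1, 0, 0, 0),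
    (1 * τ₂ ^ 2, 2, 0, 0, 0, 0, 0),
    (4 * τ₁ * τ₂, 2, 1, 0, 0, 0, 0),
    (4 * τ₁ ^ 2, 2, 2, 0, 0, 0, 0)]
  have hWo : ∀ ω, W ω = V ω + εW ω := fun ω => congrFun hW ω
  have hZo : ∀ ω, Z ω = V ω + εW ω + V ω + εZ ω := fun ω => by
    rw [show Z ω = W ω + V ω + εZ ω from congrFun hZ ω, hWo ω]
  have key1 := list_key6 V U εW εZ εX εY hVm hUm hεWm hεZm hεXm hεYm hindep
    hV hU hεW hεZ hεX hεY L1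
  have key2 := list_key6 V U εW εZ εX εY hVm hUm hεWm hεZm hεXm hεYm hindep
    hV hU hεW hεZ hεX hεY L2
  have key3 := list_key6 V U εW εZ εX εY hVm hUm hεWm hεZm hεXm hεYm hindep
    hV hU hεW hεZ hεX hεY L3
  have e1 : (fun ω => (Z ω) ^ 2 * (U ω + εY ω + τ₁ * (Z ω * U ω + εX ω) + τ₂ * W ω) ^ 2)
      = fun ω => (L1.map (fun t => t.1 * (V ω ^ t.2.1 * U ω ^ t.2.2.1 * εW ω ^ t.2.2.2.1
        * εZ ω ^ t.2.2.2.2.1 * εX ω ^ t.2.2.2.2.2.1 * εY ω ^ t.2.2.2.2.2.2))).sum := by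
    funext ω
    simp only [L1, List.map_cons, List.sum_cons, List.map_nil, List.sum_nil]
    rw [hZo ω, hWo ω]
    ring
  have e2 : (fun ω => (Z ω) ^ 2)
      = fun ω => (L2.map (fun t => t.1 * (V ω ^ t.2.1 * U ω ^ t.2.2.1 * εW ω ^ t.2.2.2.1
        * εZ ω ^ t.2.2.2.2.1 * εX ω ^ t.2.2.2.2.2.1 * εY ω ^ t.2.2.2.2.2.2))).sum := by
    funext ω
    simp only [L2, List.map_cons, List.sum_cons, List.map_nil, List.sum_nil]
    rw [hZo ω]
    ring
  have e3 : (fun ω => (U ω + εY ω + τ₁ * (Z ω * U ω + εX ω) + τ₂ * W ω) ^ 2)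
      = fun ω => (L3.map (fun t => t.1 * (V ω ^ t.2.1 * U ω ^ t.2.2.1 * εW ω ^ t.2.2.2.1
        * εZ ω ^ t.2.2.2.2.1 * εX ω ^ t.2.2.2.2.2.1 * εY ω ^ t.2.2.2.2.2.2))).sum := by
    funext ω
    simp only [L3, List.map_cons, List.sum_cons, List.map_nil, List.sum_nil]
    rw [hZo ω, hWo ω]
    ring
  have P1 : (∫ ω, (Z ω) ^ 2 * (U ω + εY ω + τ₁ * (Z ω * U ω + εX ω) + τ₂ * W ω) ^ 2 ∂μ) = 12 + 114 * τ₁ ^ 2 + 30 * τ₂ ^ 2 := by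
    calc (∫ ω, (Z ω) ^ 2 * (U ω + εY ω + τ₁ * (Z ω * U ω + εX ω) + τ₂ * W ω) ^ 2 ∂μ)
        = ∫ ω, (L1.map (fun t => t.1 * (V ω ^ t.2.1 * U ω ^ t.2.2.1 * εW ω ^ t.2.2.2.1
        * εZ ω ^ t.2.2.2.2.1 * εX ω ^ t.2.2.2.2.2.1 * εY ω ^ t.2.2.2.2.2.2))).sum ∂μ := by rw [← e1]
      _ = _ := key1.2
      _ = 12 + 114 * τ₁ ^ 2 + 30 * τ₂ ^ 2 := by
          simp only [L1]
          simp only [List.map_cons, List.sum_cons, List.map_nil, List.sum_nil, gmoment0, gmoment1,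
      gmoment2, gmoment3, gmoment4]
          ring
  have P2 : (∫ ω, (Z ω) ^ 2 ∂μ) = 6 := by
    calc (∫ ω, (Z ω) ^ 2 ∂μ)
        = ∫ ω, (L2.map (fun t => t.1 * (V ω ^ t.2.1 * U ω ^ t.2.2.1 * εW ω ^ t.2.2.2.1
        * εZ ω ^ t.2.2.2.2.1 * εX ω ^ t.2.2.2.2.2.1 * εY ω ^ t.2.2.2.2.2.2))).sum ∂μ := by rw [← e2]
      _ = _ := key2.2
      _ = 6 := by
          simp only [L2]
          simp only [List.map_cons, List.sum_cons, List.map_nil, List.sum_nil, gmoment0, gmoment1,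
      gmoment2, gmoment3, gmoment4]
          ring
  have P3 : (∫ ω, (U ω + εY ω + τ₁ * (Z ω * U ω + εX ω) + τ₂ * W ω) ^ 2 ∂μ) = 2 + 7 * τ₁ ^ 2 + 2 * τ₂ ^ 2 := by
    calc (∫ ω, (U ω + εY ω + τ₁ * (Z ω * U ω + εX ω) + τ₂ * W ω) ^ 2 ∂μ)
        = ∫ ω, (L3.map (fun t => t.1 * (V ω ^ t.2.1 * U ω ^ t.2.2.1 * εW ω ^ t.2.2.2.1
        * εZ ω ^ t.2.2.2.2.1 * εX ω ^ t.2.2.2.2.2.1 * εY ω ^ t.2.2.2.2.2.2))).sum ∂μ := by rw [← e3]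
      _ = _ := key3.2
      _ = 2 + 7 * τ₁ ^ 2 + 2 * τ₂ ^ 2 := by
          simp only [L3]
          simp only [List.map_cons, List.sum_cons, List.map_nil, List.sum_nil, gmoment0, gmoment1,
      gmoment2, gmoment3, gmoment4]
          ring
  refine ⟨P1, by rw [P2, P3]; ring, fun hI => ?_⟩
  have hWm : Measurable W := by rw [hW]; exact hVm.add hεWm
  have hZm : Measurable Z := by rw [hZ]; exact (hWm.add hVm).add hεZm
  have hKm : Measurable (fun ω => U ω + εY ω + τ₁ * (Z ω * U ω + εX ω) + τ₂ * W ω) := by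
    exact ((hUm.add hεYm).add (((hZm.mul hUm).add hεXm).const_mul τ₁)).add (hWm.const_mul τ₂)
  have h2 : IndepFun (fun ω => Z ω ^ 2) (fun ω => (U ω + εY ω + τ₁ * (Z ω * U ω + εX ω) + τ₂ * W ω) ^ 2) μ := by
    have := hI.comp (φ := fun x : ℝ => x ^ 2) (ψ := fun x : ℝ => x ^ 2)
      (measurable_id.pow_const 2) (measurable_id.pow_const 2)
    exact this
  have h3 := h2.integral_fun_mul_eq_mul_integral ((hZm.pow_const 2).aestronglyMeasurable)
    ((hKm.pow_const 2).aestronglyMeasurable)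
  rw [P1, P2, P3] at h3
  have hsq : τ₁ ^ 2 = 0 := by nlinarith [sq_nonneg τ₂]
  exact (pow_eq_zero_iff two_ne_zero).mp hsq
end

section
/- Let V, U, ε_W, ε_Z, ε_X be independent real-valued random variables with E[U] = 0 and E[ε_X] = 0, set W := V + ε_W, Z := W + V + ε_Z, and X := Z·U + ε_X, and assume Z is integrable. Then for every bounded measurable η : ℝ² → ℝ, E[η(Z, W)·X] = 0. (Hence E[X | (Z, W)] = 0 and no moment restriction based on functions of (Z, W) can identify the coefficient of X in the conditional IV model Y := X + W + U + ε_Y.) -/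
open MeasureTheory ProbabilityTheory

/-- With `V, U, ε_W, ε_Z, ε_X` independent, `E[U] = 0`, `E[ε_X] = 0`,
`W := V + ε_W`, `Z := W + V + ε_Z`, `X := Z·U + ε_X` and `Z` integrable: for every bounded
measurable `η : ℝ² → ℝ`, `E[η(Z, W)·X] = 0`. -/
theorem statement19 {Ω : Type*} [MeasurableSpace Ω] (μ : Measure Ω) [IsProbabilityMeasure μ]
    (V U εW εZ εX : Ω → ℝ)
    (hVm : Measurable V) (hUm : Measurable U) (hεWm : Measurable εW)
    (hεZm : Measurable εZ) (hεXm : Measurable εX)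
    (hindep : iIndepFun ![V, U, εW, εZ, εX] μ)
    (hUint : Integrable U μ) (hU : ∫ ω, U ω ∂μ = 0)
    (hεXint : Integrable εX μ) (hεX : ∫ ω, εX ω ∂μ = 0)
    (W Z X : Ω → ℝ)
    (hW : W = fun ω => V ω + εW ω)
    (hZ : Z = fun ω => W ω + V ω + εZ ω)
    (hX : X = fun ω => Z ω * U ω + εX ω)
    (hZint : Integrable Z μ) :
    ∀ η : ℝ × ℝ → ℝ, Measurable η → (∃ C, ∀ x, |η x| ≤ C) →
      ∫ ω, η (Z ω, W ω) * X ω ∂μ = 0 := by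
  intro η hηm ⟨C, hC⟩
  have hfm : ∀ i, Measurable (![V, U, εW, εZ, εX] i) := by
    intro i; fin_cases i <;> assumption
  have hZm : Measurable Z := by rw [hZ, hW]; measurability
  have hWm : Measurable W := by rw [hW]; measurability
  have h1 := hindep.indepFun_finset {0, 2, 3} {1} (by decide) hfm
  have h4 := hindep.indepFun_finset {0, 2, 3} {4} (by decide) hfm
  set S : Finset (Fin 5) := {0, 2, 3} with hSdef
  have h0S : (0 : Fin 5) ∈ S := by decide
  have h2S : (2 : Fin 5) ∈ S := by decide
  have h3S : (3 : Fin 5) ∈ S := by decide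
  set φ : (S → ℝ) → ℝ := fun t =>
    η (t ⟨0, h0S⟩ + t ⟨2, h2S⟩ + t ⟨0, h0S⟩ + t ⟨3, h3S⟩, t ⟨0, h0S⟩ + t ⟨2, h2S⟩) with hφdef
  have hφm : Measurable φ := by
    apply hηm.comp
    exact Measurable.prod (by fun_prop) (by fun_prop)
  set φ' : (S → ℝ) → ℝ := fun t =>
    φ t * (t ⟨0, h0S⟩ + t ⟨2, h2S⟩ + t ⟨0, h0S⟩ + t ⟨3, h3S⟩) with hφ'def
  have hφ'm : Measurable φ' := hφm.mul (by fun_prop)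
  have hblock : ∀ a, φ (fun i : S => ![V, U, εW, εZ, εX] i a) = η (Z a, W a) ∧
      φ' (fun i : S => ![V, U, εW, εZ, εX] i a) = η (Z a, W a) * Z a := by
    intro a
    have hZa : Z a = V a + εW a + V a + εZ a := by rw [hZ, hW]
    have hWa : W a = V a + εW a := by rw [hW]
    constructor
    · simp [hφdef, hZa, hWa]
    · simp [hφ'def, hφdef, hZa, hWa]
  have hψ1m : Measurable (fun t : ({1} : Finset (Fin 5)) → ℝ =>
      t ⟨1, by decide⟩) := by fun_prop
  have hψ4m : Measurable (fun t : ({4} : Finset (Fin 5)) → ℝ =>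
      t ⟨4, by decide⟩) := by fun_prop
  have hiU : IndepFun (fun a => η (Z a, W a) * Z a) U μ := by
    have := h1.comp hφ'm hψ1m
    have he1 : (fun a => φ' ((fun i : S => ![V, U, εW, εZ, εX] i a))) =
        (fun a => η (Z a, W a) * Z a) := funext fun a => (hblock a).2
    have he1' : (φ' ∘ fun a (i : S) => ![V, U, εW, εZ, εX] (i : Fin 5) a) =
        (fun a => η (Z a, W a) * Z a) := funext fun a => (hblock a).2
    have he2 : ((fun t : ({1} : Finset (Fin 5)) → ℝ => t ⟨1, by decide⟩) ∘
        (fun a (i : ({1} : Finset (Fin 5))) => ![V, U, εW, εZ, εX] (i : Fin 5) a)) = U := rfl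
    exact he2 ▸ he1' ▸ this
  have hiX : IndepFun (fun a => η (Z a, W a)) εX μ := by
    have := h4.comp hφm hψ4m
    have he1 : (fun a => φ ((fun i : S => ![V, U, εW, εZ, εX] i a))) =
        (fun a => η (Z a, W a)) := funext fun a => (hblock a).1
    have he1' : (φ ∘ fun a (i : S) => ![V, U, εW, εZ, εX] (i : Fin 5) a) =
        (fun a => η (Z a, W a)) := funext fun a => (hblock a).1
    have he2 : ((fun t : ({4} : Finset (Fin 5)) → ℝ => t ⟨4, by decide⟩) ∘
        (fun a (i : ({4} : Finset (Fin 5))) => ![V, U, εW, εZ, εX] (i : Fin 5) a)) = εX := rfl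
    exact he2 ▸ he1' ▸ this
  -- integrability
  have hηZWm : Measurable (fun a => η (Z a, W a)) := hηm.comp (hZm.prod hWm)
  have hint1 : Integrable (fun a => η (Z a, W a) * Z a) μ :=
    hZint.bdd_mul (c := C) hηZWm.aestronglyMeasurable (Filter.Eventually.of_forall fun a => by
      simpa [Real.norm_eq_abs] using hC (Z a, W a))
  have hint2 : Integrable (fun a => η (Z a, W a) * Z a * U a) μ :=
    hiU.integrable_mul hint1 hUint
  have hint3 : Integrable (fun a => η (Z a, W a) * εX a) μ :=
    hεXint.bdd_mul (c := C) hηZWm.aestronglyMeasurable (Filter.Eventually.of_forall fun a => by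
      simpa [Real.norm_eq_abs] using hC (Z a, W a))
  have hsplit : (fun ω => η (Z ω, W ω) * X ω) =
      fun ω => η (Z ω, W ω) * Z ω * U ω + η (Z ω, W ω) * εX ω := by
    funext ω; rw [hX]; ring
  have e1 : ∫ a, η (Z a, W a) * Z a * U a ∂μ =
      (∫ a, η (Z a, W a) * Z a ∂μ) * ∫ a, U a ∂μ :=
    hiU.integral_fun_mul_eq_mul_integral hint1.aestronglyMeasurable hUint.aestronglyMeasurable
  have e2 : ∫ a, η (Z a, W a) * εX a ∂μ =
      (∫ a, η (Z a, W a) ∂μ) * ∫ a, εX a ∂μ :=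
    hiX.integral_fun_mul_eq_mul_integral
      ((integrable_const C).mono' hηZWm.aestronglyMeasurable
        (Filter.Eventually.of_forall fun a => by
          simpa [Real.norm_eq_abs] using hC (Z a, W a))).aestronglyMeasurable hεXint.aestronglyMeasurable
  rw [hsplit, integral_add hint2 hint3, e1, e2, hU, hεX]
  ring
end
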